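/- (Dual transport equation: escape of the support.) Let μ > 0, R > 1, T > 0, and let r be an admissible fusion kernel with exponent μ; set r̄_ε(a,v) := r(a,v)/(1 + ε^{2μ+2} a^μ). Let δ₁ > 0 and let χ ∈ C¹_b(S) vanish whenever v ∉ [1/R, R] and whenever a ≤ c₀ v^{2/3} + δ₁. Let φ_ε be the solution of ∂_t φ_ε + (1/ε) r̄_ε(a,v)(c₀ v^{2/3} − a) ∂_a φ_ε = 0 with φ_ε(T,·) = χ. Then for every M > 1 and every σ̄ > 0 there exists ε_{M,σ̄,δ₁} ∈ (0,1) such that for every ε ≤ ε_{M,σ̄,δ₁}, the support of φ_ε(t,·) is contained in {(a,v) ∈ (0,∞)² : a ≥ M} for every t ∈ [0, T − σ̄]. -/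

import Mathlib

open MeasureTheory Real Set Filter Topology
open scoped ENNReal

noncomputable section

/-- `c₀ = (36π)^(1/3)`, the isoperimetric constant relating area and volume of a ball. -/
def c0 : ℝ := (36 * Real.pi) ^ ((1 : ℝ) / 3)

/-- The open quadrant `(0,∞)²` of pairs `(a,v)` (surface area, volume). -/
def Quad : Set (ℝ × ℝ) := {p | 0 < p.1 ∧ 0 < p.2}

/-- The isoperimetric region `{(a,v) : v > 0, a ≥ c₀ v^(2/3)}`. -/
def IsoRegion : Set (ℝ × ℝ) := {p | 0 < p.2 ∧ c0 * p.2 ^ ((2 : ℝ) / 3) ≤ p.1}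

/-- A nonnegative (Radon) measure on `(0,∞)²` supported in `{a ≥ c₀ v^(2/3)}`:
it gives zero mass to the complement of the isoperimetric region. -/
def IsIsoMeasure (m : Measure (ℝ × ℝ)) : Prop := m IsoRegionᶜ = 0

/-- `C₀((0,∞)²)`: continuous functions vanishing at infinity of the open quadrant
(extended by zero outside the quadrant). -/
def IsC0Quad (φ : ℝ × ℝ → ℝ) : Prop :=
  Continuous φ ∧ (∀ p, p ∉ Quad → φ p = 0) ∧
    ∀ δ > 0, ∃ Kc : Set (ℝ × ℝ), IsCompact Kc ∧ Kc ⊆ Quad ∧ ∀ p ∉ Kc, |φ p| ≤ δ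

/-- `C_c((0,∞)²)`: continuous functions with compact support contained in the quadrant. -/
def IsCcQuad (φ : ℝ × ℝ → ℝ) : Prop :=
  Continuous φ ∧ HasCompactSupport φ ∧ tsupport φ ⊆ Quad

/-- `C₀((0,∞))`: continuous functions on `(0,∞)` vanishing at infinity (extended by zero). -/
def IsC0Pos (φ : ℝ → ℝ) : Prop :=
  Continuous φ ∧ (∀ v, v ∉ Ioi (0 : ℝ) → φ v = 0) ∧
    ∀ δ > 0, ∃ Kc : Set ℝ, IsCompact Kc ∧ Kc ⊆ Ioi (0 : ℝ) ∧ ∀ v ∉ Kc, |φ v| ≤ δ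

/-- `C_c((0,∞))`: continuous functions with compact support contained in `(0,∞)`. -/
def IsCcPos (φ : ℝ → ℝ) : Prop :=
  Continuous φ ∧ HasCompactSupport φ ∧ tsupport φ ⊆ Ioi (0 : ℝ)

/-- Partial derivative in the area variable `a`. -/
def da (φ : ℝ × ℝ → ℝ) (p : ℝ × ℝ) : ℝ := deriv (fun a => φ (a, p.2)) p.1

/-- Time-dependent test functions `φ ∈ C¹_c([0,∞); C¹_c((0,∞)²))`. -/
def IsTestFun (ψ : ℝ × (ℝ × ℝ) → ℝ) : Prop :=
  ContDiff ℝ 1 ψ ∧ HasCompactSupport ψ ∧ ∀ q : ℝ × (ℝ × ℝ), q.2 ∉ Quad → ψ q = 0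

/-- The assumptions on the coagulation kernel `K`: continuity, symmetry, and the
two-sided power law bounds with constants `K₀ ≥ K₁ > 0` and exponents
`al > 0`, `be ∈ (0,1)`, `be - al ∈ (0,1)`. -/
structure IsCoagKernel (K : ℝ × ℝ → ℝ × ℝ → ℝ) (K₀ K₁ al be : ℝ) : Prop where
  cont : ContinuousOn (fun q : (ℝ × ℝ) × (ℝ × ℝ) => K q.1 q.2) (Quad ×ˢ Quad)
  symm : ∀ η η', K η η' = K η' η
  K1_pos : 0 < K₁
  K1_le_K0 : K₁ ≤ K₀
  al_pos : 0 < al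
  be_mem : be ∈ Ioo (0 : ℝ) 1
  be_sub_al_mem : be - al ∈ Ioo (0 : ℝ) 1
  lower : ∀ η ∈ Quad, ∀ η' ∈ Quad,
    K₁ * (η.2 ^ (-al) * η'.2 ^ be + η'.2 ^ (-al) * η.2 ^ be) ≤ K η η'
  upper : ∀ η ∈ Quad, ∀ η' ∈ Quad,
    K η η' ≤ K₀ * (η.2 ^ (-al) * η'.2 ^ be + η'.2 ^ (-al) * η.2 ^ be)

/-- The assumptions on an admissible fusion kernel `r`: positivity, `C¹` regularity,
two-sided power law bounds `R₀ a^mu v^sg ≤ r ≤ R₁ a^mu v^sg`, and the structural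
differential inequalities on the isoperimetric region. -/
structure IsFusionKernel (r : ℝ × ℝ → ℝ) (R₀ R₁ mu sg B : ℝ) : Prop where
  smooth : ContDiffOn ℝ 1 r Quad
  pos : ∀ η ∈ Quad, 0 < r η
  R0_pos : 0 < R₀
  R1_pos : 0 < R₁
  B_pos : 0 < B
  lower : ∀ η ∈ Quad, R₀ * η.1 ^ mu * η.2 ^ sg ≤ r η
  upper : ∀ η ∈ Quad, r η ≤ R₁ * η.1 ^ mu * η.2 ^ sg
  cond_pos : 0 < mu → ∀ η ∈ IsoRegion, 0 ≤ da r η - mu * η.1⁻¹ * r η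
  cond_nonpos : mu ≤ 0 → ∀ η ∈ IsoRegion,
    0 ≤ da r η * (η.1 - c0 * η.2 ^ ((2 : ℝ) / 3)) + r η
  cond_upper : ∀ η ∈ IsoRegion, da r η ≤ B * η.1⁻¹ * r η

/-- The weak identity at time `t` against the test function `ψ`, for the
fusion–coagulation equation with fusion coefficient `c` (the `Λ`-fusion problem
corresponds to `c = Λ⁻¹`). -/
def WeakIdentity (K : ℝ × ℝ → ℝ × ℝ → ℝ) (r : ℝ × ℝ → ℝ) (c : ℝ)
    (fin : Measure (ℝ × ℝ)) (f : ℝ → Measure (ℝ × ℝ))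
    (ψ : ℝ × (ℝ × ℝ) → ℝ) (t : ℝ) : Prop :=
  (∫ η, ψ (t, η) ∂(f t)) - (∫ η, ψ (0, η) ∂fin)
      - ∫ s in (0 : ℝ)..t, ∫ η, deriv (fun u => ψ (u, η)) s ∂(f s)
    = (∫ s in (0 : ℝ)..t, (1 / 2) *
        ∫ η, ∫ η', K η η' * (ψ (s, η + η') - ψ (s, η) - ψ (s, η')) ∂(f s) ∂(f s))
      + c * ∫ s in (0 : ℝ)..t,
          ∫ η, r η * (c0 * η.2 ^ ((2 : ℝ) / 3) - η.1) * da (fun p => ψ (s, p)) η ∂(f s)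

/-- A weak solution of the fusion–coagulation problem with fusion coefficient `c`
(power-law exponents `al`, `be` of the coagulation kernel enter the a priori moment
bound), initial datum `fin`: a weak-* continuous family of measures supported in the
isoperimetric region, with locally uniformly bounded `(v^(-al) + v^be)`-moments,
satisfying the weak identity for all test functions and times. -/
def IsWeakSolution (K : ℝ × ℝ → ℝ × ℝ → ℝ) (r : ℝ × ℝ → ℝ) (c al be : ℝ)
    (fin : Measure (ℝ × ℝ)) (f : ℝ → Measure (ℝ × ℝ)) : Prop :=
  (∀ t, 0 ≤ t → IsIsoMeasure (f t)) ∧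
  (∀ φ, IsC0Quad φ → ContinuousOn (fun t => ∫ η, φ η ∂(f t)) (Ici (0 : ℝ))) ∧
  (∀ T > (0 : ℝ), ∃ C : ℝ≥0∞, C ≠ ⊤ ∧ ∀ t ∈ Icc (0 : ℝ) T,
      (∫⁻ η, ENNReal.ofReal (η.2 ^ (-al) + η.2 ^ be) ∂(f t)) ≤ C) ∧
  (∀ ψ, IsTestFun ψ → ∀ t, 0 ≤ t → WeakIdentity K r c fin f ψ t)

/-- The regularized fusion kernel `r̄_ε(a,v) = r(a,v)/(1 + ε^(2μ+2) a^μ)`. -/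
def rbarFn (r : ℝ × ℝ → ℝ) (mu ε : ℝ) (η : ℝ × ℝ) : ℝ :=
  r η / (1 + ε ^ (2 * mu + 2) * η.1 ^ mu)

end

section Helpers

open Set Filter Topology

/-- constancy on a closed interval from zero derivative on the open interior. -/
lemma aux_const {f : ℝ → ℝ} {a b : ℝ} (hab : a < b) (hc : ContinuousOn f (Icc a b))
    (hd : ∀ x ∈ Ioo a b, HasDerivAt f 0 x) : f a = f b := by
  have key : ∀ x ∈ Ioo a b, f b = f x := by
    intro x hx
    have h1 : ∀ y ∈ Icc x b, f y = f x := by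
      refine constant_of_has_deriv_right_zero (hc.mono ?_) (fun y hy => ?_)
      · exact Icc_subset_Icc hx.1.le le_rfl
      · exact (hd y ⟨lt_of_lt_of_le hx.1 hy.1, hy.2⟩).hasDerivWithinAt
    exact h1 b ⟨hx.2.le, le_rfl⟩
  have hne : (𝓝[Ioo a b] a).NeBot := by
    rw [← mem_closure_iff_nhdsWithin_neBot, closure_Ioo hab.ne]
    exact ⟨le_rfl, hab.le⟩
  have h2 : Tendsto f (𝓝[Ioo a b] a) (𝓝 (f a)) :=
    (hc a ⟨le_rfl, hab.le⟩).tendsto.mono_left (nhdsWithin_mono _ Ioo_subset_Icc_self)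
  have h3 : Tendsto f (𝓝[Ioo a b] a) (𝓝 (f b)) := by
    refine Tendsto.congr' ?_ tendsto_const_nhds
    filter_upwards [self_mem_nhdsWithin] with x hx
    exact key x hx
  exact tendsto_nhds_unique h2 h3

lemma c0_pos : 0 < c0 :=
  Real.rpow_pos_of_pos (by positivity) _

lemma mem_interior_iso {a v : ℝ} (hv : 0 < v) (ha : c0 * v ^ ((2:ℝ)/3) < a) :
    (a, v) ∈ interior IsoRegion := by
  have hcont : Continuous fun p : ℝ × ℝ => c0 * p.2 ^ ((2:ℝ)/3) := by
    apply continuous_const.mul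
    have h : Continuous fun x : ℝ => x ^ ((2:ℝ)/3) := by
      rw [continuous_iff_continuousAt]
      intro x
      exact Real.continuousAt_rpow_const x _ (Or.inr (by norm_num))
    exact h.comp continuous_snd
  have hopen : IsOpen ({p : ℝ × ℝ | 0 < p.2} ∩ {p | c0 * p.2 ^ ((2:ℝ)/3) < p.1}) :=
    (isOpen_lt continuous_const continuous_snd).inter (isOpen_lt hcont continuous_fst)
  refine mem_interior.mpr ⟨_, ?_, hopen, ⟨hv, ha⟩⟩
  rintro ⟨x, y⟩ ⟨h1, h2⟩
  exact ⟨h1, le_of_lt h2⟩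

end Helpers
set_option maxHeartbeats 1000000

/-- escape of the support of the dual transport solution — if the terminal
datum vanishes within distance δ₁ of the isoperimetric line, then for all small ε the
solution is supported in `{a ≥ M}` for all times `t ∈ [0, T − σ̄]`. -/
theorem dual_transport_support_escape
    (mu sg R₀ R₁ B : ℝ) (hmu : 0 < mu)
    (R T : ℝ) (hR : 1 < R) (hT : 0 < T)
    (r : ℝ × ℝ → ℝ) (hr : IsFusionKernel r R₀ R₁ mu sg B)
    (δ₁ : ℝ) (hδ₁ : 0 < δ₁)
    (χ : ℝ × ℝ → ℝ)
    (hχ_smooth : ContDiffOn ℝ 1 χ IsoRegion)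
    (hχ_bdd : ∃ M : ℝ, ∀ η ∈ IsoRegion, |χ η| + |da χ η| ≤ M)
    (hχ_v : ∀ η : ℝ × ℝ, η.2 ∉ Icc (1 / R) R → χ η = 0)
    (hχ_iso : ∀ η : ℝ × ℝ, η.1 ≤ c0 * η.2 ^ ((2 : ℝ) / 3) + δ₁ → χ η = 0)
    -- φ ε is, for each ε ∈ (0,1), the solution of the dual transport equation
    (φ : ℝ → ℝ → ℝ × ℝ → ℝ)
    (hφ_smooth : ∀ ε ∈ Ioo (0 : ℝ) 1,
      ContDiffOn ℝ 1 (fun q : ℝ × (ℝ × ℝ) => φ ε q.1 q.2)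
        (Icc (0 : ℝ) T ×ˢ IsoRegion))
    (hφ_bdd : ∀ ε ∈ Ioo (0 : ℝ) 1,
      ∃ M : ℝ, ∀ t ∈ Icc (0 : ℝ) T, ∀ η ∈ IsoRegion, |φ ε t η| + |da (φ ε t) η| ≤ M)
    (hφ_v : ∀ ε ∈ Ioo (0 : ℝ) 1, ∀ t ∈ Icc (0 : ℝ) T,
      ∀ η : ℝ × ℝ, η.2 ∉ Icc (1 / R) R → φ ε t η = 0)
    (hφ_term : ∀ ε ∈ Ioo (0 : ℝ) 1, ∀ η ∈ IsoRegion, φ ε T η = χ η)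
    (hφ_pde : ∀ ε ∈ Ioo (0 : ℝ) 1, ∀ t ∈ Icc (0 : ℝ) T, ∀ η ∈ IsoRegion,
      deriv (fun u => φ ε u η) t
        + ε⁻¹ * rbarFn r mu ε η * (c0 * η.2 ^ ((2 : ℝ) / 3) - η.1)
          * da (φ ε t) η = 0) :
    ∀ M > (1 : ℝ), ∀ sb > (0 : ℝ), ∃ ε₀ ∈ Ioo (0 : ℝ) 1,
      ∀ ε ∈ Ioo (0 : ℝ) 1, ε ≤ ε₀ →
        ∀ t ∈ Icc (0 : ℝ) (T - sb), ∀ η ∈ IsoRegion, η.1 < M → φ ε t η = 0 := by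

  intro M hM sb hsb
  have hMpos : (0:ℝ) < M := lt_trans one_pos hM
  have hR0 : (0:ℝ) < R := lt_trans one_pos hR
  have hRinv : (0:ℝ) < R⁻¹ := inv_pos.mpr hR0
  set amin : ℝ := c0 * (R⁻¹) ^ ((2:ℝ)/3) with hamin_def
  have hamin_pos : 0 < amin := mul_pos c0_pos (Real.rpow_pos_of_pos hRinv _)
  set vlo : ℝ := min ((R⁻¹) ^ sg) (R ^ sg) with hvlo_def
  set vhi : ℝ := max ((R⁻¹) ^ sg) (R ^ sg) with hvhi_def
  have hvlo_pos : 0 < vlo :=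
    lt_min (Real.rpow_pos_of_pos hRinv _) (Real.rpow_pos_of_pos hR0 _)
  have hvhi_pos : 0 < vhi := lt_of_lt_of_le hvlo_pos (min_le_max)
  have hMmu_pos : (0:ℝ) < 1 + M ^ mu :=
    lt_of_lt_of_le one_pos (le_add_of_nonneg_right (Real.rpow_nonneg hMpos.le _))
  set c2 : ℝ := R₀ * amin ^ mu * vlo / (1 + M ^ mu) with hc2_def
  have hc2_pos : 0 < c2 := by
    apply div_pos _ hMmu_pos
    exact mul_pos (mul_pos hr.R0_pos (Real.rpow_pos_of_pos hamin_pos _)) hvlo_pos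
  set Cu : ℝ := R₁ * M ^ mu * vhi with hCu_def
  have hCu_pos : 0 < Cu :=
    mul_pos (mul_pos hr.R1_pos (Real.rpow_pos_of_pos hMpos _)) hvhi_pos
  set x0 : ℝ := max 1 (Real.log (M / δ₁)) with hx0_def
  have hx0_pos : (0:ℝ) < x0 := lt_of_lt_of_le one_pos (le_max_left _ _)
  set ε₀ : ℝ := min 2⁻¹ (c2 * sb / x0) with hε₀_def
  have hε₀_mem : ε₀ ∈ Ioo (0:ℝ) 1 := by
    constructor
    · exact lt_min (by norm_num) (div_pos (mul_pos hc2_pos hsb) hx0_pos)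
    · exact lt_of_le_of_lt (min_le_left _ _) (by norm_num)
  refine ⟨ε₀, hε₀_mem, ?_⟩
  rintro ε hε hεle t₀ ht₀ ⟨a₀, v⟩ hη haM
  rw [hε₀_def] at hεle
  have hεle2 : ε ≤ c2 * sb / x0 := le_trans hεle (min_le_right _ _)
  clear_value amin vlo vhi c2 Cu x0 ε₀
  simp only [IsoRegion, mem_setOf_eq] at hη
  obtain ⟨hv0, hLa⟩ := hη
  change (0:ℝ) < v at hv0
  change c0 * v ^ ((2:ℝ)/3) ≤ a₀ at hLa
  change a₀ < M at haM
  have hsbT : 0 ≤ T - sb := le_trans ht₀.1 ht₀.2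
  have ht₀T : t₀ < T := lt_of_le_of_lt ht₀.2 (by linarith)
  have ht₀Icc : t₀ ∈ Icc (0:ℝ) T := ⟨ht₀.1, ht₀T.le⟩
  by_cases hv : v ∈ Icc (1/R) R
  swap
  · exact hφ_v ε hε t₀ ht₀Icc (a₀, v) hv
  have hvR : v ∈ Icc R⁻¹ R := by rwa [one_div] at hv
  set L : ℝ := c0 * v ^ ((2:ℝ)/3) with hL_def
  have hLamin : amin ≤ L := by
    rw [hamin_def, hL_def]
    apply mul_le_mul_of_nonneg_left _ c0_pos.le
    exact Real.rpow_le_rpow hRinv.le hvR.1 (by norm_num)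
  have hL_pos : 0 < L := lt_of_lt_of_le hamin_pos hLamin
  have ha₀_pos : 0 < a₀ := lt_of_lt_of_le hL_pos hLa
  clear_value L
  -- bounds on v ^ sg
  have hvsg_lb : vlo ≤ v ^ sg := by
    rw [hvlo_def]
    rcases le_or_gt 0 sg with hsg | hsg
    · exact le_trans (min_le_left _ _) (Real.rpow_le_rpow hRinv.le hvR.1 hsg)
    · exact le_trans (min_le_right _ _) (Real.rpow_le_rpow_of_nonpos hv0 hvR.2 hsg.le)
  have hvsg_ub : v ^ sg ≤ vhi := by
    rw [hvhi_def]
    rcases le_or_gt 0 sg with hsg | hsg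
    · exact le_trans (Real.rpow_le_rpow hv0.le hvR.2 hsg) (le_max_right _ _)
    · exact le_trans (Real.rpow_le_rpow_of_nonpos hRinv hvR.1 hsg.le) (le_max_left _ _)
  -- bounds on rbarFn on the strip
  have hquad : ∀ x : ℝ, L ≤ x → (x, v) ∈ Quad := fun x hx =>
    ⟨lt_of_lt_of_le hL_pos hx, hv0⟩
  have hiso : ∀ x : ℝ, L ≤ x → (x, v) ∈ IsoRegion := fun x hx =>
    ⟨hv0, by show c0 * v ^ ((2:ℝ)/3) ≤ x; rw [← hL_def]; exact hx⟩
  have hden_pos : ∀ x : ℝ, 0 < x → 0 < 1 + ε ^ (2*mu+2) * x ^ mu := fun x hx =>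
    lt_of_lt_of_le one_pos (le_add_of_nonneg_right
      (mul_nonneg (Real.rpow_nonneg hε.1.le _) (Real.rpow_nonneg hx.le _)))
  have hrbar_pos : ∀ x ∈ Icc L a₀, 0 < rbarFn r mu ε (x, v) := by
    intro x hx
    exact div_pos (hr.pos _ (hquad x hx.1)) (hden_pos x (lt_of_lt_of_le hL_pos hx.1))
  have hrbar_lb : ∀ x ∈ Icc L a₀, c2 ≤ rbarFn r mu ε (x, v) := by
    intro x hx
    have hx_pos : 0 < x := lt_of_lt_of_le hL_pos hx.1
    have hxM : x ≤ M := le_trans hx.2 haM.le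
    have hden_ub : 1 + ε ^ (2*mu+2) * x ^ mu ≤ 1 + M ^ mu := by
      have h1 : ε ^ (2*mu+2) ≤ 1 := Real.rpow_le_one hε.1.le hε.2.le (by linarith)
      have h2 : x ^ mu ≤ M ^ mu := Real.rpow_le_rpow hx_pos.le hxM hmu.le
      nlinarith [Real.rpow_nonneg hx_pos.le mu, Real.rpow_nonneg hε.1.le (2*mu+2)]
    have hnum : R₀ * amin ^ mu * vlo ≤ r (x, v) := by
      refine le_trans ?_ (hr.lower _ (hquad x hx.1))
      have h1 : amin ^ mu ≤ x ^ mu :=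
        Real.rpow_le_rpow hamin_pos.le (le_trans hLamin hx.1) hmu.le
      have h2 : vlo ≤ v ^ sg := hvsg_lb
      have h3 : (0:ℝ) ≤ amin ^ mu := Real.rpow_nonneg hamin_pos.le _
      have h5 : amin ^ mu * vlo ≤ x ^ mu * v ^ sg :=
        mul_le_mul h1 h2 hvlo_pos.le (le_trans h3 h1)
      calc R₀ * amin ^ mu * vlo = R₀ * (amin ^ mu * vlo) := by ring
        _ ≤ R₀ * (x ^ mu * v ^ sg) := mul_le_mul_of_nonneg_left h5 hr.R0_pos.le
        _ = R₀ * x ^ mu * v ^ sg := by ring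
    show _ ≤ r (x, v) / (1 + ε ^ (2*mu+2) * x ^ mu)
    rw [hc2_def]
    exact div_le_div₀ (hr.pos _ (hquad x hx.1)).le hnum
      (hden_pos x hx_pos) hden_ub
  have hrbar_ub : ∀ x ∈ Icc L a₀, rbarFn r mu ε (x, v) ≤ Cu := by
    intro x hx
    show r (x, v) / (1 + ε ^ (2*mu+2) * x ^ mu) ≤ Cu
    have hx_pos : 0 < x := lt_of_lt_of_le hL_pos hx.1
    have hr_ub : r (x, v) ≤ Cu := by
      rw [hCu_def]
      refine le_trans (hr.upper _ (hquad x hx.1)) ?_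
      have h1 : x ^ mu ≤ M ^ mu :=
        Real.rpow_le_rpow hx_pos.le (le_trans hx.2 haM.le) hmu.le
      have h4 : (0:ℝ) ≤ x ^ mu := Real.rpow_nonneg hx_pos.le _
      have h5 : x ^ mu * v ^ sg ≤ M ^ mu * vhi :=
        mul_le_mul h1 hvsg_ub (Real.rpow_pos_of_pos hv0 sg).le
          (Real.rpow_nonneg hMpos.le mu)
      calc R₁ * x ^ mu * v ^ sg = R₁ * (x ^ mu * v ^ sg) := by ring
        _ ≤ R₁ * (M ^ mu * vhi) := mul_le_mul_of_nonneg_left h5 hr.R1_pos.le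
        _ = R₁ * M ^ mu * vhi := by ring
    refine le_trans (div_le_self ?_ ?_) hr_ub
    · exact (hr.pos _ (hquad x hx.1)).le
    · exact le_add_of_nonneg_right
        (mul_nonneg (Real.rpow_nonneg hε.1.le _) (Real.rpow_nonneg hx_pos.le _))
  -- the terminal condition kills everything near the line
  rcases eq_or_lt_of_le hLa with heqL | hlt
  · -- boundary case : a₀ = L, the point sits on the isoperimetric line
    set gt0 : ℝ → ℝ := fun u => φ ε u (a₀, v) with hgt0_def
    have hmapsι : MapsTo (fun u : ℝ => (u, ((a₀:ℝ), v))) (Icc (0:ℝ) T)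
        (Icc (0:ℝ) T ×ˢ IsoRegion) := fun u hu => ⟨hu, hiso a₀ hLa⟩
    have hgc1 : ContDiffOn ℝ 1 gt0 (Icc (0:ℝ) T) := by
      have := (hφ_smooth ε hε).comp
        ((contDiff_id.prodMk contDiff_const).contDiffOn
          (s := Icc (0:ℝ) T)) hmapsι
      exact this
    have hgd : ∀ u ∈ Ioo t₀ T, HasDerivAt gt0 0 u := by
      intro u hu
      have huI : u ∈ Ioo (0:ℝ) T := ⟨lt_of_le_of_lt ht₀.1 hu.1, hu.2⟩
      have hdiff : DifferentiableAt ℝ gt0 u :=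
        ((hgc1.contDiffAt (Icc_mem_nhds huI.1 huI.2)).differentiableAt one_ne_zero)
      have hpde : deriv (fun u => φ ε u (a₀, v)) u = 0 := by
        have h := hφ_pde ε hε u ⟨huI.1.le, huI.2.le⟩ (a₀, v) (hiso a₀ hLa)
        have hz : c0 * ((a₀, v) : ℝ × ℝ).2 ^ ((2:ℝ)/3) - ((a₀, v) : ℝ × ℝ).1 = 0 := by
          show c0 * v ^ ((2:ℝ)/3) - a₀ = 0
          rw [← hL_def, heqL]; ring
        rw [hz, mul_zero, zero_mul, add_zero] at h
        exact h
      have hder := hdiff.hasDerivAt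
      rw [show deriv gt0 u = deriv (fun u => φ ε u (a₀, v)) u from rfl, hpde] at hder
      exact hder
    have hkey : gt0 t₀ = gt0 T :=
      aux_const ht₀T (hgc1.continuousOn.mono (Icc_subset_Icc ht₀.1 le_rfl)) hgd
    have : gt0 T = 0 := by
      rw [hgt0_def]
      simp only
      rw [hφ_term ε hε (a₀, v) (hiso a₀ hLa)]
      exact hχ_iso (a₀, v) (by simp only; rw [← hL_def, ← heqL]; linarith)
    rw [← this]; exact hkey
  -- main case : L < a₀ ; build the characteristic curve
  · set proj : ℝ → ℝ := fun x => max L (min x a₀) with hproj_def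
    have hproj_mem : ∀ x, proj x ∈ Icc L a₀ := by
      intro x
      constructor
      · exact le_max_left _ _
      · exact max_le hLa (min_le_right _ _)
    have hproj_id : ∀ x ∈ Icc L a₀, proj x = x := by
      intro x hx
      rw [hproj_def]
      simp only
      rw [min_eq_left hx.2, max_eq_right hx.1]
    set G0 : ℝ → ℝ := fun y => ε⁻¹ * rbarFn r mu ε (y, v) * (L - y) with hG0_def
    set G : ℝ → ℝ := fun x => G0 (proj x) with hG_def
    have hεinv_pos : (0:ℝ) < ε⁻¹ := inv_pos.mpr hε.1
    have hG_nonpos : ∀ x, G x ≤ 0 := by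
      intro x
      have h1 := hrbar_pos _ (hproj_mem x)
      have h2 : L - proj x ≤ 0 := sub_nonpos.mpr (hproj_mem x).1
      have := mul_nonpos_of_nonneg_of_nonpos
        (mul_nonneg hεinv_pos.le h1.le) h2
      exact this
    set Cb : ℝ := ε⁻¹ * Cu * (a₀ - L) with hCb_def
    have hCb_nonneg : 0 ≤ Cb :=
      mul_nonneg (mul_nonneg hεinv_pos.le hCu_pos.le) (by linarith)
    have hG_bound : ∀ x, ‖G x‖ ≤ Cb := by
      intro x
      have h1 := hrbar_pos _ (hproj_mem x)
      have h2 := hrbar_ub _ (hproj_mem x)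
      have h3 := hproj_mem x
      rw [Real.norm_eq_abs]
      rw [abs_le]
      constructor
      · show -Cb ≤ ε⁻¹ * rbarFn r mu ε (proj x, v) * (L - proj x)
        have h4 : rbarFn r mu ε (proj x, v) * (proj x - L) ≤ Cu * (a₀ - L) :=
          mul_le_mul h2 (sub_le_sub_right h3.2 L) (sub_nonneg.mpr h3.1) hCu_pos.le
        have h5 := mul_le_mul_of_nonneg_left h4 hεinv_pos.le
        have h6 : ε⁻¹ * rbarFn r mu ε (proj x, v) * (L - proj x)
            = -(ε⁻¹ * (rbarFn r mu ε (proj x, v) * (proj x - L))) := by ring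
        rw [hCb_def, h6, mul_assoc]
        exact neg_le_neg h5
      · exact le_trans (hG_nonpos x) hCb_nonneg
    -- Lipschitz bound for G
    have hIccSub : Icc L a₀ ⊆ Ioi (0:ℝ) := fun y hy => lt_of_lt_of_le hL_pos hy.1
    have hG0c1 : ContDiffOn ℝ 1 G0 (Ioi 0) := by
      have hcr : ContDiffOn ℝ 1 (fun y : ℝ => r (y, v)) (Ioi 0) :=
        hr.smooth.comp ((contDiff_id.prodMk contDiff_const).contDiffOn)
          (fun y hy => ⟨hy, hv0⟩)
      have hcp : ContDiffOn ℝ 1 (fun y : ℝ => y ^ mu) (Ioi 0) := fun y hy =>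
        (Real.contDiffAt_rpow_const_of_ne (ne_of_gt hy)).contDiffWithinAt
      have hcden : ContDiffOn ℝ 1 (fun y : ℝ => 1 + ε ^ (2*mu+2) * y ^ mu) (Ioi 0) :=
        contDiffOn_const.add (contDiffOn_const.mul hcp)
      have hne : ∀ y ∈ Ioi (0:ℝ), 1 + ε ^ (2*mu+2) * y ^ mu ≠ 0 := fun y hy =>
        ne_of_gt (hden_pos y hy)
      have : ContDiffOn ℝ 1 (fun y : ℝ => rbarFn r mu ε (y, v)) (Ioi 0) := by
        have := hcr.div hcden hne
        exact this
      exact (contDiffOn_const.mul this).mul (contDiffOn_const.sub contDiffOn_id)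
    obtain ⟨Kb, hKb⟩ := (isCompact_Icc : IsCompact (Icc L a₀)).exists_bound_of_continuousOn
      ((hG0c1.continuousOn_deriv_of_isOpen isOpen_Ioi le_rfl).mono hIccSub)
    have hG0lip : LipschitzOnWith (Real.toNNReal Kb) G0 (Icc L a₀) := by
      apply Convex.lipschitzOnWith_of_nnnorm_deriv_le (fun x hx => ?_) (fun x hx => ?_)
        (convex_Icc L a₀)
      · exact (hG0c1.contDiffAt (isOpen_Ioi.mem_nhds (hIccSub hx))).differentiableAt one_ne_zero
      · rw [← NNReal.coe_le_coe, coe_nnnorm, Real.coe_toNNReal']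
        exact le_trans (hKb x hx) (le_max_left _ _)
    have hprojlip : LipschitzWith 1 proj := (LipschitzWith.id.min_const a₀).const_max L
    have hGlip : LipschitzWith (Real.toNNReal Kb * 1) G := by
      rw [← lipschitzOnWith_univ]
      exact hG0lip.comp (lipschitzOnWith_univ.mpr hprojlip)
        (fun x _ => hproj_mem x)
    -- Picard–Lindelöf
    have hpl : IsPicardLindelof (fun _ x => G x) (tmin := t₀) (tmax := T)
        ⟨t₀, le_rfl, ht₀T.le⟩ a₀ (Cb * (T - t₀) + 1).toNNReal 0 Cb.toNNReal
        (Real.toNNReal Kb * 1) := by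
      constructor
      · exact fun t _ => hGlip.lipschitzOnWith
      · exact fun x _ => continuousOn_const
      · intro t _ x _
        rw [Real.coe_toNNReal _ hCb_nonneg]
        exact hG_bound x
      · have : max (T - t₀) (t₀ - t₀) = T - t₀ := by
          rw [max_eq_left]; linarith
        have hpos : 0 ≤ Cb * (T - t₀) + 1 := by
          nlinarith [mul_nonneg hCb_nonneg (sub_nonneg.mpr ht₀T.le)]
        simp only [NNReal.coe_zero, sub_zero, tsub_zero]
        rw [Real.coe_toNNReal _ hCb_nonneg, Real.coe_toNNReal _ hpos]
        change Cb * max (T - t₀) (t₀ - t₀) ≤ _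
        rw [this]; linarith
    obtain ⟨A, hA0', hA⟩ := hpl.exists_eq_forall_mem_Icc_hasDerivWithinAt₀
    have hA0 : A t₀ = a₀ := hA0'
    have hAcont : ContinuousOn A (Icc t₀ T) := fun s hs =>
      (hA s hs).continuousWithinAt
    have hAd : ∀ s ∈ Ioo t₀ T, HasDerivAt A (G (A s)) s := fun s hs =>
      (hA s ⟨hs.1.le, hs.2.le⟩).hasDerivAt (Icc_mem_nhds hs.1 hs.2)
    -- upper invariance
    have hAanti : AntitoneOn A (Icc t₀ T) := by
      apply antitoneOn_of_deriv_nonpos (convex_Icc t₀ T) hAcont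
      · intro s hs
        rw [interior_Icc] at hs
        exact (hAd s hs).differentiableAt.differentiableWithinAt
      · intro s hs
        rw [interior_Icc] at hs
        rw [(hAd s hs).deriv]
        exact hG_nonpos _
    have hAle : ∀ s ∈ Icc t₀ T, A s ≤ a₀ := by
      intro s hs
      have := hAanti ⟨le_rfl, ht₀T.le⟩ hs hs.1
      rwa [hA0] at this
    -- lower invariance
    have hAge : ∀ s ∈ Icc t₀ T, L ≤ A s := by
      by_contra hcon
      push_neg at hcon
      obtain ⟨s₁, hs₁, hs₁lt⟩ := hcon
      set Sset : Set ℝ := Icc t₀ s₁ ∩ A ⁻¹' Ici L with hSset_def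
      have hSne : Sset.Nonempty := ⟨t₀, ⟨le_rfl, hs₁.1⟩, by
        simp only [mem_preimage, mem_Ici, hA0]; exact hLa⟩
      have hSbdd : BddAbove Sset := ⟨s₁, fun s hs => hs.1.2⟩
      have hSclosed : IsClosed Sset :=
        ContinuousOn.preimage_isClosed_of_isClosed
          (hAcont.mono (Icc_subset_Icc le_rfl hs₁.2)) isClosed_Icc isClosed_Ici
      set u := sSup Sset with hu_def
      have huS : u ∈ Sset := hSclosed.csSup_mem hSne hSbdd
      have hu1 : u ≤ s₁ := csSup_le hSne (fun s hs => hs.1.2)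
      have huge : L ≤ A u := huS.2
      have hult : u < s₁ := by
        rcases eq_or_lt_of_le hu1 with h | h
        · exfalso; rw [h] at huge; linarith
        · exact h
      have hAlt : ∀ s ∈ Ioc u s₁, A s < L := by
        intro s hs
        by_contra hge
        push_neg at hge
        have hmem : s ∈ Sset := ⟨⟨le_trans huS.1.1 hs.1.le, hs.2⟩, hge⟩
        exact absurd (le_csSup hSbdd hmem) (not_le.mpr hs.1)
      have huT : u ∈ Icc t₀ T := ⟨huS.1.1, le_trans hu1 hs₁.2⟩
      have hAu_le : A u ≤ L := by
        have hne : (𝓝[Ioc u s₁] u).NeBot := by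
          rw [← mem_closure_iff_nhdsWithin_neBot, closure_Ioc hult.ne]
          exact ⟨le_rfl, hult.le⟩
        have htend : Tendsto A (𝓝[Ioc u s₁] u) (𝓝 (A u)) :=
          (hAcont u huT).tendsto.mono_left
            (nhdsWithin_mono _ (fun x hx =>
              ⟨le_trans huS.1.1 hx.1.le, le_trans hx.2 hs₁.2⟩))
        refine le_of_tendsto htend ?_
        filter_upwards [self_mem_nhdsWithin] with x hx
        exact (hAlt x hx).le
      have hconst : ∀ x ∈ Icc u s₁, A x = A u := by
        refine constant_of_has_deriv_right_zero
          (hAcont.mono (Icc_subset_Icc huS.1.1 hs₁.2)) (fun y hy => ?_)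
        have hyIcc : y ∈ Icc t₀ T :=
          ⟨le_trans huS.1.1 hy.1, le_trans hy.2.le hs₁.2⟩
        have hyT : y < T := lt_of_lt_of_le hy.2 hs₁.2
        have hAyL : A y ≤ L := by
          rcases eq_or_lt_of_le hy.1 with h | h
          · rw [← h]; exact hAu_le
          · exact (hAlt y ⟨h, hy.2.le⟩).le
        have hGzero : G (A y) = 0 := by
          have hpr : proj (A y) = L := by
            rw [hproj_def]
            simp only
            rw [max_eq_left (le_trans (min_le_left _ _) hAyL)]
          rw [hG_def]
          simp only
          rw [hpr, hG0_def]
          simp only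
          ring
        have hder := hA y hyIcc
        rw [hGzero] at hder
        exact hder.mono_of_mem_nhdsWithin (Icc_mem_nhdsGE_of_mem ⟨hyIcc.1, hyT⟩)
      have := hconst s₁ ⟨hult.le, le_rfl⟩
      rw [this] at hs₁lt
      linarith
    have hrange : ∀ s ∈ Icc t₀ T, A s ∈ Icc L a₀ := fun s hs =>
      ⟨hAge s hs, hAle s hs⟩
    have hGA : ∀ s ∈ Icc t₀ T, G (A s) = ε⁻¹ * rbarFn r mu ε (A s, v) * (L - A s) := by
      intro s hs
      rw [hG_def]
      simp only
      rw [hproj_id _ (hrange s hs)]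
    -- derivative of the Gronwall auxiliary functions
    have hhd : ∀ c : ℝ, ∀ s ∈ Ioo t₀ T,
        HasDerivAt (fun s => (A s - L) * Real.exp (c * s))
          (G (A s) * Real.exp (c * s) + (A s - L) * (Real.exp (c * s) * c)) s := by
      intro c s hs
      have h1 : HasDerivAt (fun s => A s - L) (G (A s)) s := (hAd s hs).sub_const L
      have h2 : HasDerivAt (fun s : ℝ => Real.exp (c * s)) (Real.exp (c * s) * c) s := by
        have := ((hasDerivAt_id s).const_mul c).exp
        simpa using this
      exact h1.mul h2
    have hexp_cont : ∀ c : ℝ, Continuous (fun s : ℝ => Real.exp (c * s)) := fun c =>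
      Real.continuous_exp.comp (continuous_const.mul continuous_id)
    -- upper Gronwall : decay at rate c2/ε
    have hanti : AntitoneOn (fun s => (A s - L) * Real.exp ((c2/ε) * s)) (Icc t₀ T) := by
      apply antitoneOn_of_deriv_nonpos (convex_Icc t₀ T)
        ((hAcont.sub continuousOn_const).mul (hexp_cont _).continuousOn)
      · intro s hs
        rw [interior_Icc] at hs
        exact (hhd _ s hs).differentiableAt.differentiableWithinAt
      · intro s hs
        rw [interior_Icc] at hs
        change deriv (fun s => (A s - L) * Real.exp ((c2/ε) * s)) s ≤ 0
        rw [(hhd _ s hs).deriv]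
        have hsIcc : s ∈ Icc t₀ T := ⟨hs.1.le, hs.2.le⟩
        have hg0 : 0 ≤ A s - L := sub_nonneg.mpr (hAge s hsIcc)
        have hrb := hrbar_lb _ (hrange s hsIcc)
        have hrbp := hrbar_pos _ (hrange s hsIcc)
        have he : (0:ℝ) < Real.exp ((c2/ε) * s) := Real.exp_pos _
        rw [hGA s hsIcc]
        have hfact : (A s - L) * (c2 - rbarFn r mu ε (A s, v)) ≤ 0 :=
          mul_nonpos_of_nonneg_of_nonpos hg0 (sub_nonpos.mpr hrb)
        have hkey : Real.exp (c2 / ε * s) * ε⁻¹ * ((A s - L) * (c2 - rbarFn r mu ε (A s, v))) ≤ 0 :=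
          mul_nonpos_of_nonneg_of_nonpos (mul_nonneg he.le hεinv_pos.le) hfact
        calc ε⁻¹ * rbarFn r mu ε (A s, v) * (L - A s) * Real.exp (c2 / ε * s)
              + (A s - L) * (Real.exp (c2 / ε * s) * (c2 / ε))
            = Real.exp (c2 / ε * s) * ε⁻¹ * ((A s - L) * (c2 - rbarFn r mu ε (A s, v))) := by
              rw [div_eq_mul_inv]; ring
          _ ≤ 0 := hkey
    -- lower Gronwall : positivity at rate Cu/ε
    have hmono : MonotoneOn (fun s => (A s - L) * Real.exp ((Cu/ε) * s)) (Icc t₀ T) := by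
      apply monotoneOn_of_deriv_nonneg (convex_Icc t₀ T)
        ((hAcont.sub continuousOn_const).mul (hexp_cont _).continuousOn)
      · intro s hs
        rw [interior_Icc] at hs
        exact (hhd _ s hs).differentiableAt.differentiableWithinAt
      · intro s hs
        rw [interior_Icc] at hs
        change 0 ≤ deriv (fun s => (A s - L) * Real.exp ((Cu/ε) * s)) s
        rw [(hhd _ s hs).deriv]
        have hsIcc : s ∈ Icc t₀ T := ⟨hs.1.le, hs.2.le⟩
        have hg0 : 0 ≤ A s - L := sub_nonneg.mpr (hAge s hsIcc)
        have hrb := hrbar_ub _ (hrange s hsIcc)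
        have hrbp := hrbar_pos _ (hrange s hsIcc)
        have he : (0:ℝ) < Real.exp ((Cu/ε) * s) := Real.exp_pos _
        rw [hGA s hsIcc]
        have hfact : 0 ≤ (A s - L) * (Cu - rbarFn r mu ε (A s, v)) :=
          mul_nonneg hg0 (sub_nonneg.mpr hrb)
        have hkey : 0 ≤ Real.exp (Cu / ε * s) * ε⁻¹ * ((A s - L) * (Cu - rbarFn r mu ε (A s, v))) :=
          mul_nonneg (mul_nonneg he.le hεinv_pos.le) hfact
        calc (0:ℝ) ≤ Real.exp (Cu / ε * s) * ε⁻¹ * ((A s - L) * (Cu - rbarFn r mu ε (A s, v))) := hkey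
          _ = ε⁻¹ * rbarFn r mu ε (A s, v) * (L - A s) * Real.exp (Cu / ε * s)
              + (A s - L) * (Real.exp (Cu / ε * s) * (Cu / ε)) := by
              rw [div_eq_mul_inv]; ring
    have hApos : ∀ s ∈ Icc t₀ T, L < A s := by
      intro s hs
      have h1 : (A t₀ - L) * Real.exp ((Cu/ε) * t₀) ≤ (A s - L) * Real.exp ((Cu/ε) * s) :=
        hmono ⟨le_rfl, ht₀T.le⟩ hs hs.1
      rw [hA0] at h1
      have h2 : (0:ℝ) < (a₀ - L) * Real.exp ((Cu/ε) * t₀) :=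
        mul_pos (by linarith) (Real.exp_pos _)
      have h3 : (0:ℝ) < (A s - L) * Real.exp ((Cu/ε) * s) := lt_of_lt_of_le h2 h1
      by_contra hcontra
      push_neg at hcontra
      have h4 : (A s - L) * Real.exp ((Cu/ε) * s) ≤ 0 :=
        mul_nonpos_of_nonpos_of_nonneg (by linarith) (Real.exp_pos _).le
      linarith
    -- the endpoint estimate : A T is δ₁-close to the line
    have hAT_close : A T ≤ L + δ₁ := by
      have h1 : (A T - L) * Real.exp ((c2/ε) * T) ≤ (A t₀ - L) * Real.exp ((c2/ε) * t₀) :=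
        hanti ⟨le_rfl, ht₀T.le⟩ ⟨ht₀T.le, le_rfl⟩ ht₀T.le
      rw [hA0] at h1
      -- (A T - L) * exp(kT) ≤ (a₀ - L) * exp(k t₀)
      set k : ℝ := c2 / ε with hk_def
      have hk_pos : 0 < k := div_pos hc2_pos hε.1
      have hiq : A T - L ≤ (a₀ - L) * Real.exp (k * t₀ - k * T) := by
        have h2 : A T - L ≤ (a₀ - L) * Real.exp (k * t₀) / Real.exp (k * T) :=
          (le_div_iff₀ (Real.exp_pos _)).mpr h1
        calc A T - L ≤ (a₀ - L) * Real.exp (k * t₀) / Real.exp (k * T) := h2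
          _ = (a₀ - L) * Real.exp (k * t₀ - k * T) := by rw [Real.exp_sub]; ring
      have hexp1 : Real.exp (k * t₀ - k * T) ≤ Real.exp (-(k * sb)) := by
        apply Real.exp_le_exp.mpr
        have h5 : sb ≤ T - t₀ := by linarith [ht₀.2]
        have h6 := mul_le_mul_of_nonneg_left h5 hk_pos.le
        rw [mul_sub] at h6
        linarith
      have hM1 : a₀ - L ≤ M := by linarith
      have hexp2 : Real.exp (-(k * sb)) ≤ δ₁ / M := by
        have hlog : Real.log (M / δ₁) ≤ k * sb := by
          have h1 : ε * x0 ≤ c2 * sb := by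
            have := (le_div_iff₀ hx0_pos).mp hεle2
            linarith
          have h2 : x0 ≤ c2 * sb / ε := by
            rw [le_div_iff₀ hε.1]
            linarith
          have h3 : k * sb = c2 * sb / ε := by
            rw [hk_def]; ring
          rw [h3]
          refine le_trans ?_ h2
          rw [hx0_def]
          exact le_max_right _ _
        have : -(k * sb) ≤ Real.log (δ₁ / M) := by
          rw [show δ₁ / M = (M / δ₁)⁻¹ by rw [inv_div], Real.log_inv]
          linarith
        calc Real.exp (-(k * sb)) ≤ Real.exp (Real.log (δ₁ / M)) :=
              Real.exp_le_exp.mpr this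
          _ = δ₁ / M := Real.exp_log (div_pos hδ₁ hMpos)
      have hfinal : A T - L ≤ δ₁ := by
        calc A T - L ≤ (a₀ - L) * Real.exp (k * t₀ - k * T) := hiq
          _ ≤ M * (δ₁ / M) := by
              apply mul_le_mul hM1 (le_trans hexp1 hexp2) (Real.exp_pos _).le hMpos.le
          _ = δ₁ := by field_simp
      linarith
    -- transport : φ is constant along the characteristic
    set Φ : ℝ → ℝ := fun s => φ ε s (A s, v) with hΦ_def
    have hmapsγ : MapsTo (fun s : ℝ => (s, (A s, v))) (Icc t₀ T)
        (Icc (0:ℝ) T ×ˢ IsoRegion) := fun s hs =>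
      ⟨⟨le_trans ht₀.1 hs.1, hs.2⟩, hiso _ (hAge s hs)⟩
    have hΦcont : ContinuousOn Φ (Icc t₀ T) := by
      apply (hφ_smooth ε hε).continuousOn.comp
        ((continuousOn_id.prodMk (hAcont.prodMk continuousOn_const))) hmapsγ
    have hΦd : ∀ s ∈ Ioo t₀ T, HasDerivAt Φ 0 s := by
      intro s hs
      have hsIcc : s ∈ Icc t₀ T := ⟨hs.1.le, hs.2.le⟩
      have hs0T : s ∈ Ioo (0:ℝ) T := ⟨lt_of_le_of_lt ht₀.1 hs.1, hs.2⟩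
      have hqint : (s, ((A s : ℝ), v)) ∈ interior (Icc (0:ℝ) T ×ˢ IsoRegion) := by
        rw [interior_prod_eq, interior_Icc]
        refine ⟨hs0T, mem_interior_iso hv0 ?_⟩
        have := hApos s hsIcc
        rwa [hL_def] at this
      have hΨat : ContDiffAt ℝ 1 (fun q : ℝ × (ℝ × ℝ) => φ ε q.1 q.2) (s, (A s, v)) :=
        (hφ_smooth ε hε).contDiffAt (mem_interior_iff_mem_nhds.mp hqint)
      have hDat : DifferentiableAt ℝ (fun q : ℝ × (ℝ × ℝ) => φ ε q.1 q.2) (s, (A s, v)) :=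
        hΨat.differentiableAt one_ne_zero
      set D := fderiv ℝ (fun q : ℝ × (ℝ × ℝ) => φ ε q.1 q.2) (s, (A s, v)) with hD_def
      have hD : HasFDerivAt (fun q : ℝ × (ℝ × ℝ) => φ ε q.1 q.2) D (s, (A s, v)) :=
        hDat.hasFDerivAt
      -- partial derivative in time
      have hι : HasDerivAt (fun u : ℝ => (u, ((A s : ℝ), v)))
          ((1:ℝ), ((0:ℝ), (0:ℝ))) s := by
        have := (hasDerivAt_id s).prodMk (hasDerivAt_const s ((A s : ℝ), v))
        exact this
      have hpt : HasDerivAt (fun u : ℝ => φ ε u (A s, v))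
          (D ((1:ℝ), ((0:ℝ), (0:ℝ)))) s := by have h := hD.comp_hasDerivAt s hι; exact h
      -- partial derivative in a
      have hκ : HasDerivAt (fun a : ℝ => ((s:ℝ), (a, v)))
          ((0:ℝ), ((1:ℝ), (0:ℝ))) (A s) := by
        have := (hasDerivAt_const (A s) s).prodMk
          ((hasDerivAt_id (A s)).prodMk (hasDerivAt_const (A s) v))
        simpa using this
      have hpa : HasDerivAt (fun a : ℝ => φ ε s (a, v))
          (D ((0:ℝ), ((1:ℝ), (0:ℝ)))) (A s) := by have h := hD.comp_hasDerivAt (A s) hκ; exact h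
      -- the full derivative along the curve
      have hγ : HasDerivAt (fun s : ℝ => ((s : ℝ), (A s, v)))
          ((1:ℝ), (G (A s), (0:ℝ))) s := by
        have := (hasDerivAt_id s).prodMk ((hAd s hs).prodMk (hasDerivAt_const s v))
        simpa using this
      have hΦder : HasDerivAt Φ (D ((1:ℝ), (G (A s), (0:ℝ)))) s :=
        by have h := hD.comp_hasDerivAt s hγ; exact h
      -- use the PDE
      have hpde := hφ_pde ε hε s ⟨hs0T.1.le, hs0T.2.le⟩ (A s, v) (hiso _ (hAge s hsIcc))
      simp only at hpde
      have hpt' : deriv (fun u => φ ε u (A s, v)) s = D ((1:ℝ), ((0:ℝ), (0:ℝ))) :=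
        hpt.deriv
      have hpa' : da (φ ε s) (A s, v) = D ((0:ℝ), ((1:ℝ), (0:ℝ))) := by
        rw [da]
        exact hpa.deriv
      rw [hpt', hpa'] at hpde
      have hsplit : ((1:ℝ), (G (A s), (0:ℝ)))
          = ((1:ℝ), ((0:ℝ), (0:ℝ))) + G (A s) • ((0:ℝ), ((1:ℝ), (0:ℝ))) := by
        simp [Prod.ext_iff]
      have hval : D ((1:ℝ), (G (A s), (0:ℝ))) = 0 := by
        rw [hsplit, D.map_add, D.map_smul]
        rw [hGA s hsIcc]
        simp only [smul_eq_mul]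
        rw [← hL_def] at hpde
        linarith [hpde]
      rw [hval] at hΦder
      exact hΦder
    have hkey : Φ t₀ = Φ T := aux_const ht₀T hΦcont hΦd
    have hend : Φ T = 0 := by
      rw [hΦ_def]
      simp only
      rw [hφ_term ε hε (A T, v) (hiso _ (hAge T ⟨ht₀T.le, le_rfl⟩))]
      apply hχ_iso (A T, v)
      simp only
      rw [← hL_def]
      linarith [hAT_close]
    have : Φ t₀ = φ ε t₀ (a₀, v) := by
      rw [hΦ_def]
      simp only
      rw [hA0]
    rw [← this, hkey, hend]
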